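/- Let G = (V, E) be a finite simple graph and let g be any k-algebra automorphism of the evolution algebra X(G) (a k-linear bijection of X(G) commuting with multiplication). Then there exists a graph automorphism σ of G such that g(b_v) = b_{σ(v)} for all v ∈ V and g(b_{{v,w}}) = b_{{σ(v),σ(w)}} for all {v,w} ∈ E; that is, g = X(σ). -/

import Mathlib

open scoped BigOperators

set_option maxHeartbeats 1000000
set_option synthInstance.maxHeartbeats 1000000
set_option linter.unusedSectionVars false

variable (k : Type*) [Field k]

section Defs

variable {V : Type*} [Fintype V] [DecidableEq V]

/-- The square `b i * b i` of the `i`-th natural basis vector of the evolution algebra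
`X(G)` attached to a simple graph `G`: for a vertex `v`, `b_v * b_v = b_v`; for an edge
`e = {v, w}`, `b_e * b_e = b_e + b_v + b_w`. -/
noncomputable def graphSq (G : SimpleGraph V) [DecidableRel G.Adj] :
    (V ⊕ ↥G.edgeSet) → (V ⊕ ↥G.edgeSet) → k
  | Sum.inl v => Pi.single (Sum.inl v) 1
  | Sum.inr e => Pi.single (Sum.inr e) 1 +
      ∑ v ∈ Finset.univ.filter (· ∈ (e : Sym2 V)), Pi.single (Sum.inl v) 1

/-- The multiplication of the evolution algebra `X(G)` attached to a simple graph `G`,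
as a `k`-bilinear map on the space of functions `(V ⊕ G.edgeSet) → k`.  Distinct natural
basis vectors multiply to zero, and the squares are given by `graphSq`. -/
noncomputable def graphMul (G : SimpleGraph V) [DecidableRel G.Adj] :
    ((V ⊕ ↥G.edgeSet) → k) →ₗ[k] ((V ⊕ ↥G.edgeSet) → k) →ₗ[k] ((V ⊕ ↥G.edgeSet) → k) :=
  LinearMap.mk₂ k (fun x y => ∑ i, (x i * y i) • graphSq k G i)
    (by intro x x' y; simp [add_mul, add_smul, Finset.sum_add_distrib])
    (by intro c x y; simp [Finset.smul_sum, smul_smul, mul_assoc])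
    (by intro x y y'; simp [mul_add, add_smul, Finset.sum_add_distrib])
    (by intro c x y; simp [Finset.smul_sum, smul_smul, mul_assoc, mul_left_comm])

end Defs

section Morphisms

variable {V₁ V₂ : Type*} [Fintype V₁] [DecidableEq V₁] [Fintype V₂] [DecidableEq V₂]

/-- The map induced on natural-basis index sets by a graph morphism `f : G₁ → G₂`:
a vertex `v` is sent to `f v` and an edge `{v, w}` to `{f v, f w}`. -/
def graphIdxMap (G₁ : SimpleGraph V₁) (G₂ : SimpleGraph V₂) (f : V₁ → V₂)
    (hf : ∀ ⦃v w : V₁⦄, G₁.Adj v w → G₂.Adj (f v) (f w)) :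
    V₁ ⊕ ↥G₁.edgeSet → V₂ ⊕ ↥G₂.edgeSet
  | Sum.inl v => Sum.inl (f v)
  | Sum.inr e => Sum.inr ⟨Sym2.map f (e : Sym2 V₁), by
      obtain ⟨s, hs⟩ := e
      induction s using Sym2.ind with
      | _ v w => simpa using hf (by simpa using hs)⟩

/-- The `k`-linear map `X(f) : X(G₁) → X(G₂)` induced by a graph morphism `f`, sending
each natural basis vector of `X(G₁)` to the corresponding natural basis vector of
`X(G₂)`. -/
noncomputable def graphXmap (G₁ : SimpleGraph V₁) (G₂ : SimpleGraph V₂)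
    [DecidableRel G₁.Adj] [DecidableRel G₂.Adj] (f : V₁ → V₂)
    (hf : ∀ ⦃v w : V₁⦄, G₁.Adj v w → G₂.Adj (f v) (f w)) :
    ((V₁ ⊕ ↥G₁.edgeSet) → k) →ₗ[k] ((V₂ ⊕ ↥G₂.edgeSet) → k) :=
  (Pi.basisFun k (V₁ ⊕ ↥G₁.edgeSet)).constr k fun i =>
    Pi.single (graphIdxMap G₁ G₂ f hf i) 1

end Morphisms

section Aux

variable {V : Type*} [Fintype V] [DecidableEq V] (G : SimpleGraph V) [DecidableRel G.Adj]

lemma graphMul_apply (x y : (V ⊕ ↥G.edgeSet) → k) :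
    graphMul k G x y = ∑ i, (x i * y i) • graphSq k G i := rfl

lemma graphMul_comm (x y : (V ⊕ ↥G.edgeSet) → k) :
    graphMul k G x y = graphMul k G y x := by
  simp [graphMul_apply, mul_comm]

lemma graphMul_single_left (i : V ⊕ ↥G.edgeSet) (y : (V ⊕ ↥G.edgeSet) → k) :
    graphMul k G (Pi.single i 1) y = y i • graphSq k G i := by
  rw [graphMul_apply, Finset.sum_eq_single i]
  · simp
  · intro j _ hj
    rw [Pi.single_eq_of_ne hj, zero_mul, zero_smul]
  · simp

lemma graphMul_single_right (i : V ⊕ ↥G.edgeSet) (y : (V ⊕ ↥G.edgeSet) → k) :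
    graphMul k G y (Pi.single i 1) = y i • graphSq k G i := by
  rw [graphMul_comm, graphMul_single_left]

lemma graphSq_inl (v : V) :
    graphSq k G (Sum.inl v) = Pi.single (Sum.inl v) 1 := rfl

lemma graphSq_inr (e : ↥G.edgeSet) :
    graphSq k G (Sum.inr e) = Pi.single (Sum.inr e) 1 +
      ∑ v ∈ Finset.univ.filter (· ∈ (e : Sym2 V)), Pi.single (Sum.inl v) 1 := rfl

lemma edgeSum_apply_inl (t : V → V) (ht : Function.Injective t) (e : Sym2 V)
    (he : ¬ e.IsDiag) (u : V) :
    (∑ v ∈ Finset.univ.filter (· ∈ e),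
        (Pi.single (Sum.inl (t v)) 1 : (V ⊕ ↥G.edgeSet) → k)) (Sum.inl u)
      = if u ∈ Sym2.map t e then 1 else 0 := by
  induction e using Sym2.ind with
  | _ a b =>
    have hab : a ≠ b := by simpa using he
    have hfil : Finset.univ.filter (· ∈ (s(a, b) : Sym2 V)) = {a, b} := by
      ext u; simp [Sym2.mem_iff]
    rw [hfil, Finset.sum_pair hab, Sym2.map_pair_eq]
    have htab : t a ≠ t b := fun h => hab (ht h)
    by_cases h1 : u = t a
    · simp [h1, Pi.single_apply, htab, Sym2.mem_iff]
    · by_cases h2 : u = t b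
      · simp [h1, h2, Pi.single_apply, Sym2.mem_iff, htab.symm]
      · simp [Pi.single_apply, h1, h2, Sym2.mem_iff]

lemma edgeSum_apply_inl_id (e : Sym2 V) (he : ¬ e.IsDiag) (u : V) :
    (∑ v ∈ Finset.univ.filter (· ∈ e),
        (Pi.single (Sum.inl v) 1 : (V ⊕ ↥G.edgeSet) → k)) (Sum.inl u)
      = if u ∈ e then 1 else 0 := by
  have h := edgeSum_apply_inl k G id Function.injective_id e he u
  simpa using h

lemma edgeSum_apply_inr (e : Sym2 V) (f : ↥G.edgeSet) :
    (∑ v ∈ Finset.univ.filter (· ∈ e),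
        (Pi.single (Sum.inl v) 1 : (V ⊕ ↥G.edgeSet) → k)) (Sum.inr f) = 0 := by
  rw [Finset.sum_apply]
  exact Finset.sum_eq_zero fun v _ => by simp [Pi.single_apply]

lemma graphSq_apply_inr (i : V ⊕ ↥G.edgeSet) (e : ↥G.edgeSet) :
    graphSq k G i (Sum.inr e) = if i = Sum.inr e then 1 else 0 := by
  cases i with
  | inl v => simp [graphSq, Pi.single_apply]
  | inr e' =>
    rw [graphSq]
    rw [Pi.add_apply, edgeSum_apply_inr k G]
    simp [Pi.single_apply, eq_comm]

lemma graphSq_inr_apply_inl (f : ↥G.edgeSet) (u : V) :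
    graphSq k G (Sum.inr f) (Sum.inl u) = if u ∈ (f : Sym2 V) then (1:k) else 0 := by
  rw [graphSq, Pi.add_apply,
    edgeSum_apply_inl_id k G (f : Sym2 V) (G.not_isDiag_of_mem_edgeSet f.2) u,
    Pi.single_apply]
  simp

lemma graphSq_indep (c : (V ⊕ ↥G.edgeSet) → k)
    (h : ∑ i, c i • graphSq k G i = 0) : ∀ i, c i = 0 := by
  have he : ∀ e : ↥G.edgeSet, c (Sum.inr e) = 0 := by
    intro e
    have h2 := congrFun h (Sum.inr e)
    rw [Finset.sum_apply, Pi.zero_apply] at h2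
    simpa [graphSq_apply_inr] using h2
  intro i
  cases i with
  | inr e => exact he e
  | inl v =>
    have h2 := congrFun h (Sum.inl v)
    rw [Finset.sum_apply, Pi.zero_apply, Fintype.sum_sum_type] at h2
    simp only [Pi.smul_apply, he, zero_smul, Pi.zero_apply, Finset.sum_const_zero,
      add_zero, smul_eq_mul] at h2
    simpa [graphSq_inl, Pi.single_apply] using h2

lemma graphSq_coeff_eq (c d : (V ⊕ ↥G.edgeSet) → k)
    (h : ∑ i, c i • graphSq k G i = ∑ i, d i • graphSq k G i) (i : V ⊕ ↥G.edgeSet) :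
    c i = d i := by
  have := graphSq_indep k G (fun i => c i - d i)
    (by simp [sub_smul, Finset.sum_sub_distrib, h]) i
  exact sub_eq_zero.mp this

lemma single_of_line (x : (V ⊕ ↥G.edgeSet) → k) (hx : x ≠ 0)
    (h : ∀ y, ∃ c : k, graphMul k G x y = c • graphMul k G x x) :
    ∃ i : V ⊕ ↥G.edgeSet, ∃ c : k, c ≠ 0 ∧ x = c • (Pi.single i 1 : (V ⊕ ↥G.edgeSet) → k) := by
  obtain ⟨i, hi⟩ := Function.ne_iff.mp hx
  rw [Pi.zero_apply] at hi
  refine ⟨i, x i, hi, funext fun j => ?_⟩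
  rw [Pi.smul_apply, Pi.single_apply, smul_eq_mul]
  by_cases hj : j = i
  · simp [hj]
  · rw [if_neg hj, mul_zero]
    obtain ⟨c, hc⟩ := h (Pi.single j 1)
    rw [graphMul_single_right, graphMul_apply, Finset.smul_sum] at hc
    have hc' : ∑ l, (if l = j then x j else 0) • graphSq k G l
        = ∑ l, (c * (x l * x l)) • graphSq k G l := by
      simp only [smul_smul] at hc
      rw [← hc]
      simp [ite_smul]
    have hci := graphSq_coeff_eq k G _ _ hc' i
    have hcj := graphSq_coeff_eq k G _ _ hc' j
    rw [if_neg (fun h' => hj h'.symm)] at hci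
    rw [if_pos rfl] at hcj
    have hc0 : c = 0 := by
      rcases mul_eq_zero.mp hci.symm with h' | h'
      · exact h'
      · exact absurd (mul_self_eq_zero.mp h') hi
    rw [hc0, zero_mul] at hcj
    exact hcj

lemma edgeSum_apply_inr' (t : V → V) (e : Sym2 V) (f : ↥G.edgeSet) :
    (∑ v ∈ Finset.univ.filter (· ∈ e),
        (Pi.single (Sum.inl (t v)) 1 : (V ⊕ ↥G.edgeSet) → k)) (Sum.inr f) = 0 := by
  rw [Finset.sum_apply]
  exact Finset.sum_eq_zero fun v _ => by simp [Pi.single_apply]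

lemma eq_one_of_eq_mul_self {a : k} (ha : a ≠ 0) (h : a = a * a) : a = 1 :=
  mul_left_cancel₀ ha (by rw [mul_one, ← h])

end Aux

/-- Every `k`-algebra automorphism `g` of the evolution algebra `X(G)` of a finite simple
graph `G` (a `k`-linear bijection commuting with the multiplication) is induced by a graph
automorphism `σ` of `G`: it permutes the vertex basis vectors and the edge basis vectors
according to `σ`; in particular `g = X(σ)`. -/
theorem graphEvolutionAlgebra_aut_induced {V : Type*} [Fintype V] [DecidableEq V]
    (G : SimpleGraph V) [DecidableRel G.Adj]
    (g : ((V ⊕ ↥G.edgeSet) → k) ≃ₗ[k] ((V ⊕ ↥G.edgeSet) → k))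
    (hg : ∀ x y : (V ⊕ ↥G.edgeSet) → k,
        g (graphMul k G x y) = graphMul k G (g x) (g y)) :
    ∃ σ : G ≃g G,
      (∀ v : V, g (Pi.single (Sum.inl v) 1) = Pi.single (Sum.inl (σ v)) 1) ∧
      (∀ e : ↥G.edgeSet,
        g (Pi.single (Sum.inr e) 1) = Pi.single (Sum.inr (σ.mapEdgeSet e)) 1) ∧
      g.toLinearMap = graphXmap k G G σ (fun _ _ h => σ.map_rel_iff.mpr h) := by
  classical
  -- Step 1: each basis vector is sent to a nonzero multiple of a basis vector
  have key : ∀ i : V ⊕ ↥G.edgeSet, ∃ j : V ⊕ ↥G.edgeSet, ∃ c : k, c ≠ 0 ∧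
      g (Pi.single i 1) = c • (Pi.single j 1 : (V ⊕ ↥G.edgeSet) → k) := by
    intro i
    apply single_of_line k G
    · intro h0
      have h1 : (Pi.single i 1 : (V ⊕ ↥G.edgeSet) → k) ≠ 0 := by
        intro h2
        have := congrFun h2 i
        simp at this
      exact h1 (g.injective (by simpa using h0))
    · intro y
      refine ⟨(g.symm y) i, ?_⟩
      calc graphMul k G (g (Pi.single i 1)) y
          = graphMul k G (g (Pi.single i 1)) (g (g.symm y)) := by
            rw [g.apply_symm_apply]
        _ = g (graphMul k G (Pi.single i 1) (g.symm y)) := (hg _ _).symm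
        _ = g ((g.symm y) i • graphMul k G (Pi.single i 1) (Pi.single i 1)) := by
            rw [graphMul_single_left, graphMul_single_left]
            simp [smul_smul]
        _ = (g.symm y) i • g (graphMul k G (Pi.single i 1) (Pi.single i 1)) :=
            map_smul _ _ _
        _ = (g.symm y) i • graphMul k G (g (Pi.single i 1)) (g (Pi.single i 1)) := by
            rw [hg]
  choose π κ hκ hgb using key
  -- Step 2: π is injective, hence bijective
  have hπinj : Function.Injective π := by
    intro i j hij
    by_contra hne
    have h1 : g ((κ j) • (Pi.single i 1 : (V ⊕ ↥G.edgeSet) → k))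
        = (κ i * κ j) • (Pi.single (π i) 1 : (V ⊕ ↥G.edgeSet) → k) := by
      rw [map_smul, hgb i, smul_smul, mul_comm]
    have h2 : g ((κ i) • (Pi.single j 1 : (V ⊕ ↥G.edgeSet) → k))
        = (κ i * κ j) • (Pi.single (π i) 1 : (V ⊕ ↥G.edgeSet) → k) := by
      rw [map_smul, hgb j, smul_smul, hij]
    have h3 : (κ j) • (Pi.single i 1 : (V ⊕ ↥G.edgeSet) → k)
        = (κ i) • (Pi.single j 1 : (V ⊕ ↥G.edgeSet) → k) :=
      g.injective (by rw [h1, h2])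
    have h4 := congrFun h3 i
    rw [Pi.smul_apply, Pi.smul_apply, Pi.single_eq_same, Pi.single_eq_of_ne hne] at h4
    simp at h4
    exact hκ j h4
  -- Step 3: transport of squares
  have hsq : ∀ i, g (graphSq k G i) = (κ i * κ i) • graphSq k G (π i) := by
    intro i
    have h1 : graphMul k G (Pi.single i 1) (Pi.single i (1:k)) = graphSq k G i := by
      rw [graphMul_single_left]
      simp
    calc g (graphSq k G i)
        = g (graphMul k G (Pi.single i 1) (Pi.single i 1)) := by rw [h1]
      _ = graphMul k G (g (Pi.single i 1)) (g (Pi.single i 1)) := hg _ _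
      _ = (κ i * κ i) • graphSq k G (π i) := by
          rw [hgb i]
          simp only [map_smul, LinearMap.smul_apply, graphMul_single_left,
            Pi.single_eq_same, one_smul, smul_smul]
  -- Step 4: vertices go to vertices, with coefficient 1
  have hvert : ∀ v : V, ∃ w : V, π (Sum.inl v) = Sum.inl w ∧ κ (Sum.inl v) = 1 := by
    intro v
    have h1 := hsq (Sum.inl v)
    rw [graphSq_inl, hgb (Sum.inl v)] at h1
    cases hπv : π (Sum.inl v) with
    | inr e =>
      exfalso
      rw [hπv] at h1
      obtain ⟨a, ha⟩ : ∃ a, a ∈ (e : Sym2 V) := ⟨(e : Sym2 V).out.1, Sym2.out_fst_mem _⟩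
      have h2 := congrFun h1 (Sum.inl a)
      rw [Pi.smul_apply, Pi.smul_apply, Pi.single_eq_of_ne (by simp),
        graphSq_inr_apply_inl, if_pos ha] at h2
      simp only [smul_zero, smul_eq_mul, mul_zero, mul_one] at h2
      exact hκ _ (mul_self_eq_zero.mp h2.symm)
    | inl w =>
      refine ⟨w, rfl, ?_⟩
      rw [hπv, graphSq_inl] at h1
      have h2 := congrFun h1 (Sum.inl w)
      rw [Pi.smul_apply, Pi.smul_apply, Pi.single_eq_same] at h2
      simp only [smul_eq_mul, mul_one] at h2
      exact eq_one_of_eq_mul_self k (hκ (Sum.inl v)) h2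
  choose σ₀ hσ₀ hκv using hvert
  have hσinj : Function.Injective σ₀ := by
    intro a b hab
    have := hπinj (show π (Sum.inl a) = π (Sum.inl b) by rw [hσ₀, hσ₀, hab])
    exact Sum.inl_injective this
  have hσbij : Function.Bijective σ₀ := Finite.injective_iff_bijective.mp hσinj
  -- Step 5: edges go to edges, coefficient 1, compatible with σ₀
  have hedge : ∀ e : ↥G.edgeSet, ∃ f : ↥G.edgeSet, π (Sum.inr e) = Sum.inr f ∧
      κ (Sum.inr e) = 1 ∧ (f : Sym2 V) = Sym2.map σ₀ (e : Sym2 V) := by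
    intro e
    have hde : ¬ (e : Sym2 V).IsDiag := G.not_isDiag_of_mem_edgeSet e.2
    have h1 := hsq (Sum.inr e)
    rw [graphSq_inr, map_add, map_sum, hgb (Sum.inr e)] at h1
    have hL : ∀ v : V, g (Pi.single (Sum.inl v) (1:k))
        = Pi.single (Sum.inl (σ₀ v)) 1 := by
      intro v
      rw [hgb (Sum.inl v), hκv v, hσ₀ v, one_smul]
    rw [Finset.sum_congr rfl (fun v _ => hL v)] at h1
    cases hπe : π (Sum.inr e) with
    | inl u =>
      exfalso
      obtain ⟨v, hv⟩ := hσbij.2 u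
      have : Sum.inr e = Sum.inl v := hπinj (by rw [hπe, hσ₀ v, hv])
      simp at this
    | inr f =>
      rw [hπe] at h1
      have hdf : ¬ (f : Sym2 V).IsDiag := G.not_isDiag_of_mem_edgeSet f.2
      -- coefficient: evaluate at the edge coordinate f
      have h2 := congrFun h1 (Sum.inr f)
      rw [Pi.add_apply, Pi.smul_apply, Pi.smul_apply, Pi.single_eq_same,
        edgeSum_apply_inr' k G σ₀, graphSq_apply_inr, if_pos rfl] at h2
      simp only [smul_eq_mul, mul_one, add_zero] at h2
      have hκe : κ (Sum.inr e) = 1 := eq_one_of_eq_mul_self k (hκ (Sum.inr e)) h2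
      refine ⟨f, rfl, hκe, ?_⟩
      -- value: evaluate at vertex coordinates
      apply Sym2.ext
      intro u
      have h3 := congrFun h1 (Sum.inl u)
      rw [Pi.add_apply, Pi.smul_apply, Pi.smul_apply,
        Pi.single_eq_of_ne (by simp : (Sum.inl u : V ⊕ ↥G.edgeSet) ≠ Sum.inr f),
        edgeSum_apply_inl k G σ₀ hσinj (e : Sym2 V) hde u,
        graphSq_inr_apply_inl, hκe] at h3
      simp only [smul_eq_mul, mul_zero, zero_add, one_mul] at h3
      by_cases h5 : u ∈ Sym2.map σ₀ (e : Sym2 V) <;>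
        by_cases h6 : u ∈ (f : Sym2 V) <;>
        simp [h5, h6] at h3 ⊢
  choose fm hfπ hκe hfval using hedge
  -- Step 6: assemble the graph automorphism
  have hadj : ∀ a b : V, G.Adj a b → G.Adj (σ₀ a) (σ₀ b) := by
    intro a b hab
    have he : s(a, b) ∈ G.edgeSet := hab
    have := (fm ⟨s(a, b), he⟩).2
    rw [hfval ⟨s(a, b), he⟩] at this
    simpa [Sym2.map_pair_eq] using this
  have hfminj : Function.Injective fm := by
    intro e e' h
    have : (e : Sym2 V) = (e' : Sym2 V) := by
      have h1 := hfval e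
      have h2 := hfval e'
      rw [h] at h1
      exact Sym2.map.injective hσinj (h1.symm.trans h2)
    exact Subtype.ext this
  have hfmsurj : Function.Surjective fm := Finite.injective_iff_surjective.mp hfminj
  have hadj' : ∀ a b : V, G.Adj (σ₀ a) (σ₀ b) → G.Adj a b := by
    intro a b hab
    have he : s(σ₀ a, σ₀ b) ∈ G.edgeSet := hab
    obtain ⟨e, he'⟩ := hfmsurj ⟨s(σ₀ a, σ₀ b), he⟩
    have h1 : Sym2.map σ₀ (e : Sym2 V) = Sym2.map σ₀ s(a, b) := by
      rw [← hfval e, he', Sym2.map_pair_eq]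
    have h2 : (e : Sym2 V) = s(a, b) := Sym2.map.injective hσinj h1
    have := e.2
    rw [h2] at this
    exact this
  let σ : G ≃g G := ⟨Equiv.ofBijective σ₀ hσbij, by
    intro a b
    exact ⟨hadj' a b, hadj a b⟩⟩
  have hσcoe : ∀ v : V, σ v = σ₀ v := fun v => rfl
  have hvfinal : ∀ v : V, g (Pi.single (Sum.inl v) (1:k))
      = Pi.single (Sum.inl (σ v)) 1 := by
    intro v
    rw [hgb (Sum.inl v), hκv v, hσ₀ v, one_smul, hσcoe]
  have hefinal : ∀ e : ↥G.edgeSet, g (Pi.single (Sum.inr e) (1:k))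
      = Pi.single (Sum.inr (σ.mapEdgeSet e)) 1 := by
    intro e
    have hme : σ.mapEdgeSet e = fm e := by
      apply Subtype.ext
      rw [hfval e]
      rfl
    rw [hgb (Sum.inr e), hκe e, hfπ e, one_smul, hme]
  refine ⟨σ, hvfinal, hefinal, ?_⟩
  apply Module.Basis.ext (Pi.basisFun k (V ⊕ ↥G.edgeSet))
  intro i
  unfold graphXmap
  rw [Module.Basis.constr_basis, Pi.basisFun_apply]
  simp only [LinearEquiv.coe_coe]
  cases i with
  | inl v => exact hvfinal v
  | inr e =>
    rw [hefinal e]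
    congr 1
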